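/- Suppose a₁ = q₂ + l₂q₁ ≠ 0 and a₂ = q₁ + l₁q₂ ≠ 0, and let x₁ = s₁ − l₁s₂ − q₁s₁s₂, x₂ = s₂ − l₂s₁ − q₂s₁s₂. Define the permuted solution σ₁ = −(a₂/a₁)s₂ − (l₁l₂−1)/a₁ and σ₂ = −(a₁/a₂)s₁ − (l₁l₂−1)/a₂. Then (σ₁,σ₂) produces the same observations: σ₁ − l₁σ₂ − q₁σ₁σ₂ = x₁ and σ₂ − l₂σ₁ − q₂σ₁σ₂ = x₂. -/

import Mathlib

/-- The permuted solution `(σ₁, σ₂)` produces the same observations as `(s₁, s₂)`. -/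
theorem stmt_8 (l₁ l₂ q₁ q₂ s₁ s₂ x₁ x₂ a₁ a₂ σ₁ σ₂ : ℝ)
    (ha₁ : a₁ = q₂ + l₂ * q₁) (ha₁0 : a₁ ≠ 0)
    (ha₂ : a₂ = q₁ + l₁ * q₂) (ha₂0 : a₂ ≠ 0)
    (hx₁ : x₁ = s₁ - l₁ * s₂ - q₁ * s₁ * s₂)
    (hx₂ : x₂ = s₂ - l₂ * s₁ - q₂ * s₁ * s₂)
    (hσ₁ : σ₁ = -(a₂ / a₁) * s₂ - (l₁ * l₂ - 1) / a₁)
    (hσ₂ : σ₂ = -(a₁ / a₂) * s₁ - (l₁ * l₂ - 1) / a₂) :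
    σ₁ - l₁ * σ₂ - q₁ * σ₁ * σ₂ = x₁ ∧
    σ₂ - l₂ * σ₁ - q₂ * σ₁ * σ₂ = x₂ := by
  subst hσ₁ hσ₂ hx₁ hx₂ ha₁ ha₂
  have h₁ : q₂ + q₁ * l₂ ≠ 0 := by rwa [mul_comm q₁ l₂]
  have h₂ : q₁ + q₂ * l₁ ≠ 0 := by rwa [mul_comm q₂ l₁]
  constructor <;> field_simp <;> ring
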